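/- arXiv:2405.19813 — 3 statements merged into one kernel-verified Lean document; each statement's English description precedes it below -/
import Mathlib

section
/- (Theorem 3, structural form.) Let q ≥ 1, m, n, p be natural numbers. For each i ∈ Fin q let Aᵢ be an m×n real matrix, and let B be an m×p real matrix. Define the real matrix M with row index type Fin q × Fin m and column index type (Fin q × Fin n) ⊕ Fin p by M((i,r), inl(j,c)) = Aᵢ(r,c) if i = j and 0 otherwise, and M((i,r), inr c) = B(r,c). Suppose there exists j ∈ Fin q such that (i) the m×(n+p) horizontal concatenation [Aⱼ B] has full column rank (rank n + p), and (ii) Aᵢ has full column rank (rank n) for every i ≠ j. Then M has full column rank (rank(M) = q·n + p). -/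
open Matrix

lemma rank_eq_card_iff_ker {m n : Type*} [Fintype m] [Fintype n]
    (M : Matrix m n ℝ) :
    M.rank = Fintype.card n ↔ ∀ v, M *ᵥ v = 0 → v = 0 := by
  rw [← Matrix.ker_mulVecLin_eq_bot_iff, Matrix.rank]
  constructor
  · intro h
    have := M.mulVecLin.finrank_range_add_finrank_ker
    rw [h, Module.finrank_fintype_fun_eq_card] at this
    have hker : Module.finrank ℝ (LinearMap.ker M.mulVecLin) = 0 := by omega
    exact Submodule.finrank_eq_zero.mp hker
  · intro h
    have := M.mulVecLin.finrank_range_add_finrank_ker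
    rw [h, finrank_bot, Module.finrank_fintype_fun_eq_card] at this
    omega

/-- Theorem 3 (structural form): the block matrix `M` with diagonal blocks `Aᵢ` and last
column block a vertical stack of copies of `B` has full column rank provided that for some
`j` the horizontal concatenation `[Aⱼ B]` has full column rank and all other `Aᵢ` have
full column rank. -/
theorem full_column_rank_of_blocks
    (q m n p : ℕ) (hq : 1 ≤ q)
    (A : Fin q → Matrix (Fin m) (Fin n) ℝ)
    (B : Matrix (Fin m) (Fin p) ℝ)
    (M : Matrix (Fin q × Fin m) ((Fin q × Fin n) ⊕ Fin p) ℝ)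
    (hM : ∀ row col, M row col =
      match row, col with
      | (i, r), Sum.inl (j, c) => if i = j then A i r c else 0
      | (_, r), Sum.inr c => B r c)
    (j : Fin q)
    (hj : (Matrix.fromCols (A j) B).rank = n + p)
    (hAi : ∀ i : Fin q, i ≠ j → (A i).rank = n) :
    M.rank = q * n + p := by
  have hcard : Fintype.card ((Fin q × Fin n) ⊕ Fin p) = q * n + p := by simp
  rw [← hcard, rank_eq_card_iff_ker]
  intro v hv
  have hj' : ∀ z, fromCols (A j) B *ᵥ z = 0 → z = 0 :=
    (rank_eq_card_iff_ker (fromCols (A j) B)).mp (by simpa using hj)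
  have hAi' : ∀ i, i ≠ j → ∀ z : Fin n → ℝ, A i *ᵥ z = 0 → z = 0 := fun i hi =>
    (rank_eq_card_iff_ker (A i)).mp (by simpa using hAi i hi)
  set w : Fin p → ℝ := fun c => v (Sum.inr c) with hw
  set u : Fin q → Fin n → ℝ := fun i c => v (Sum.inl (i, c)) with hu
  have hrow : ∀ i : Fin q, A i *ᵥ u i + B *ᵥ w = 0 := by
    intro i
    funext r
    have := congrFun hv (i, r)
    simpa [Matrix.mulVec, dotProduct, hM, Fintype.sum_sum_type,
      Fintype.sum_prod_type, Finset.sum_ite_eq, hw, hu] using this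
  have hzj : Sum.elim (u j) w = 0 := by
    apply hj'
    rw [fromCols_mulVec_sumElim]
    exact hrow j
  have hw0 : w = 0 := by funext c; exact congrFun hzj (Sum.inr c)
  have huj : u j = 0 := by funext c; exact congrFun hzj (Sum.inl c)
  have hui : ∀ i, u i = 0 := by
    intro i
    by_cases hij : i = j
    · rw [hij]; exact huj
    · apply hAi' i hij
      have := hrow i
      rw [hw0] at this
      simpa using this
  funext col
  rcases col with ⟨i, c⟩ | c
  · exact congrFun (hui i) c
  · exact congrFun hw0 c
end

section
/- (Theorem 4(ii).) Let K ≥ 3, let c > 0 be a real number, let Δ : Fin K → ℝ with Δ₂ ≠ Δ₁ (indices 1-based: the time stamps of the first two sound events differ), and let s¹,…,sᴷ be nonzero vectors in ℝ³ such that for every k ∈ {2,…,K} there exists a nonzero real λ_{k−1} with sᵏ = λ_{k−1} · sᵏ⁻¹ (i.e., all source positions are collinear with the origin). Set uᵏ = sᵏ / (c·‖sᵏ‖) ∈ ℝ³, and define the (K−2)×3 real matrix Ψ whose row indexed by k ∈ {3,…,K} is the row vector (u¹ − uᵏ)ᵀ − ((Δ_k − Δ₁)/(Δ₂ − Δ₁))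 · (u¹ − u²)ᵀ. Then rank(Ψ) ≤ 1; in particular Ψ, and hence T̄ = [0; Ψ; 0], does not have full column rank 3. -/
open Matrix

/-- Theorem 4(ii): if all source positions are collinear with the origin of the reference
array frame, then the block `Ψ` of the reduced matrix `T̄ = [0; Ψ; 0]` has rank at most 1;
in particular `T̄` does not have full column rank 3. -/
theorem Tbar_rank_deficient_of_collinear_with_origin
    (K : ℕ) (hK : 3 ≤ K) (c : ℝ) (hc : 0 < c)
    (Δ : Fin K → ℝ)
    (hΔ : Δ ⟨1, by omega⟩ ≠ Δ ⟨0, by omega⟩)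
    (s : Fin K → EuclideanSpace ℝ (Fin 3))
    (hs : ∀ k, s k ≠ 0)
    (hcol : ∀ k l : Fin K, (l : ℕ) + 1 = (k : ℕ) →
      ∃ lam : ℝ, lam ≠ 0 ∧ s k = lam • s l)
    (u : Fin K → EuclideanSpace ℝ (Fin 3))
    (hu : ∀ k, u k = (c * ‖s k‖)⁻¹ • s k)
    (Ψ : Matrix (Fin (K - 2)) (Fin 3) ℝ)
    (hΨ : ∀ (i : Fin (K - 2)) (c3 : Fin 3), Ψ i c3 =
      (u ⟨0, by omega⟩ c3 - u ⟨(i : ℕ) + 2, by omega⟩ c3) -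
        ((Δ ⟨(i : ℕ) + 2, by omega⟩ - Δ ⟨0, by omega⟩) /
            (Δ ⟨1, by omega⟩ - Δ ⟨0, by omega⟩)) *
          (u ⟨0, by omega⟩ c3 - u ⟨1, by omega⟩ c3))
    (Tbar : Matrix (Fin 2 ⊕ (Fin (K - 2) ⊕ Fin (3 * K))) (Fin 3) ℝ)
    (hT : ∀ row col, Tbar row col =
      match row, col with
      | Sum.inl _, _ => 0
      | Sum.inr (Sum.inl i), c3 => Ψ i c3
      | Sum.inr (Sum.inr _), _ => 0) :
    Ψ.rank ≤ 1 ∧ Tbar.rank < 3 := by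
  have hcs : ∀ k : Fin K, (c * ‖s k‖) ≠ 0 := fun k => by
    have : ‖s k‖ ≠ 0 := norm_ne_zero_iff.mpr (hs k)
    positivity
  -- every u k is a multiple of u 0
  have key : ∀ n (h : n < K), ∃ μ : ℝ, u ⟨n, h⟩ = μ • u ⟨0, by omega⟩ := by
    intro n
    induction n with
    | zero => intro h; exact ⟨1, (one_smul _ _).symm⟩
    | succ m ih =>
      intro h
      obtain ⟨μ, hμ⟩ := ih (by omega)
      obtain ⟨lam, hlam0, hlam⟩ := hcol ⟨m + 1, h⟩ ⟨m, by omega⟩ rfl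
      set A := c * ‖s ⟨m + 1, h⟩‖ with hA
      set B := c * ‖s ⟨m, by omega⟩‖ with hB
      have hsl : s ⟨m, by omega⟩ = B • u ⟨m, by omega⟩ := by
        rw [hu, smul_smul, ← hB, mul_inv_cancel₀ (hcs _), one_smul]
      refine ⟨A⁻¹ * (lam * (B * μ)), ?_⟩
      rw [hu ⟨m + 1, h⟩, ← hA, hlam, hsl, hμ, smul_smul, smul_smul, smul_smul,
        mul_assoc, mul_assoc]
  choose μ hμ using key
  -- row coefficients
  set u0 : EuclideanSpace ℝ (Fin 3) := u ⟨0, by omega⟩ with hu0def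
  have hrow : ∀ (n : ℕ) (h : n < K) (c3 : Fin 3), u ⟨n, h⟩ c3 = μ n h * u0 c3 := by
    intro n h c3
    rw [hμ n h]; rfl
  set b : Matrix (Fin 1) (Fin 3) ℝ := Matrix.of fun _ c3 => u0 c3 with hb
  have hbrank : b.rank ≤ 1 := by
    have := Matrix.rank_le_card_height b
    simpa using this
  set α : Fin (K - 2) → ℝ := fun i =>
    (1 - μ ((i : ℕ) + 2) (by omega)) -
      ((Δ ⟨(i : ℕ) + 2, by omega⟩ - Δ ⟨0, by omega⟩) /
          (Δ ⟨1, by omega⟩ - Δ ⟨0, by omega⟩)) * (1 - μ 1 (by omega)) with hα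
  have hΨfact : Ψ = (Matrix.of fun i (_ : Fin 1) => α i) * b := by
    ext i c3
    rw [Matrix.mul_apply, Fin.sum_univ_one, hΨ i c3,
      hrow ((i : ℕ) + 2) (by omega) c3, hrow 1 (by omega) c3]
    simp only [Matrix.of_apply, hα, hb]
    ring
  have hΨrank : Ψ.rank ≤ 1 := by
    rw [hΨfact]
    exact le_trans (Matrix.rank_mul_le_right _ _) hbrank
  refine ⟨hΨrank, ?_⟩
  have hTfact : Tbar = (Matrix.of fun r (_ : Fin 1) =>
      Sum.elim (fun _ => (0 : ℝ)) (Sum.elim (fun i => α i) (fun _ => 0)) r) * b := by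
    ext r c3
    obtain (x | (i | x)) := r
    · rw [hT (Sum.inl x) c3, Matrix.mul_apply, Fin.sum_univ_one]
      simp
    · rw [hT (Sum.inr (Sum.inl i)) c3, Matrix.mul_apply, Fin.sum_univ_one]
      show Ψ i c3 = _
      rw [hΨfact]
      simp [Matrix.mul_apply, Fin.sum_univ_one]
    · rw [hT (Sum.inr (Sum.inr x)) c3, Matrix.mul_apply, Fin.sum_univ_one]
      simp
  have : Tbar.rank ≤ 1 := by
    rw [hTfact]
    exact le_trans (Matrix.rank_mul_le_right _ _) hbrank
  omega
end

section
/- (Theorem 5(i), structural form.) Let K ≥ 1, let R be an invertible 3×3 real matrix (e.g., a rotation matrix), and let Δ¹,…,Δᴷ be nonzero vectors in ℝ³ such that for every k ∈ {2,…,K} there exists a nonzero real ε_{k−1} with Δᵏ = ε_{k−1}·Δᵏ⁻¹ (i.e., the source positions are collinear with the origin of the array frame). For each k define the 3×3 real matrix Uᵏ = −Rᵀ·((‖Δᵏ‖²·I₃ − Δᵏ(Δᵏ)ᵀ)/‖Δᵏ‖³). Then the (3K)×3 matrix obtained by vertically stacking U¹,…,Uᴷ has rank exactly 2; in particular it does not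 have full column rank 3. -/
open Matrix

lemma vecMulVec_mulVec_aux (d v : Fin 3 → ℝ) :
    (vecMulVec d d).mulVec v = (d ⬝ᵥ v) • d := by
  funext i
  simp only [Matrix.mulVec, vecMulVec_apply, dotProduct, Pi.smul_apply, smul_eq_mul,
    Finset.sum_mul]
  exact Finset.sum_congr rfl fun j _ => by ring

lemma rank_aux (d : Fin 3 → ℝ) (hd : d ≠ 0) :
    ((d ⬝ᵥ d) • (1 : Matrix (Fin 3) (Fin 3) ℝ) - vecMulVec d d).rank = 2 := by
  set M : Matrix (Fin 3) (Fin 3) ℝ :=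
    (d ⬝ᵥ d) • (1 : Matrix (Fin 3) (Fin 3) ℝ) - vecMulVec d d with hM
  have hdd : d ⬝ᵥ d ≠ 0 := fun h => hd (dotProduct_self_eq_zero.mp h)
  have hmv : ∀ v, M.mulVec v = (d ⬝ᵥ d) • v - (d ⬝ᵥ v) • d := by
    intro v
    rw [hM, Matrix.sub_mulVec, Matrix.smul_mulVec, Matrix.one_mulVec,
      vecMulVec_mulVec_aux]
  have hker : LinearMap.ker M.mulVecLin = Submodule.span ℝ {d} := by
    ext v
    rw [LinearMap.mem_ker, Matrix.mulVecLin_apply, hmv, Submodule.mem_span_singleton]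
    constructor
    · intro h
      refine ⟨(d ⬝ᵥ v) / (d ⬝ᵥ d), ?_⟩
      have : (d ⬝ᵥ d) • v = (d ⬝ᵥ v) • d := by linear_combination (norm := module) h
      funext i
      have := congrFun this i
      simp only [Pi.smul_apply, smul_eq_mul] at this ⊢
      rw [div_mul_eq_mul_div, div_eq_iff hdd]
      linear_combination -this
    · rintro ⟨a, rfl⟩
      have h1 : d ⬝ᵥ a • d = a * (d ⬝ᵥ d) := by
        simp [dotProduct, Finset.mul_sum, mul_comm, mul_left_comm]
      rw [h1]
      module
  have h1 : Module.finrank ℝ (LinearMap.range M.mulVecLin)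
      + Module.finrank ℝ (LinearMap.ker M.mulVecLin) = 3 := by
    rw [LinearMap.finrank_range_add_finrank_ker]
    simp [Module.finrank_pi]
  rw [hker, finrank_span_singleton hd] at h1
  have : M.rank = Module.finrank ℝ (LinearMap.range M.mulVecLin) := rfl
  omega

/-- Theorem 5(i): if the displacements `Δᵏ` from the array to the source are pairwise
collinear (through the array origin), then the vertical stack of the DOA Jacobian blocks
`Uᵏ = -Rᵀ (‖Δᵏ‖² I₃ - Δᵏ(Δᵏ)ᵀ)/‖Δᵏ‖³` has rank exactly 2, hence not full column rank 3. -/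
theorem stacked_U_rank_two_of_collinear
    (K : ℕ) (hK : 1 ≤ K)
    (R : Matrix (Fin 3) (Fin 3) ℝ) (hR : IsUnit R.det)
    (Δ : Fin K → EuclideanSpace ℝ (Fin 3))
    (hΔ : ∀ k, Δ k ≠ 0)
    (hcol : ∀ k l : Fin K, (l : ℕ) + 1 = (k : ℕ) →
      ∃ ε : ℝ, ε ≠ 0 ∧ Δ k = ε • Δ l)
    (U : Fin K → Matrix (Fin 3) (Fin 3) ℝ)
    (hU : ∀ k, U k = -((‖Δ k‖ ^ 3)⁻¹ •
      (Rᵀ * ((‖Δ k‖ ^ 2 • (1 : Matrix (Fin 3) (Fin 3) ℝ)) -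
        Matrix.vecMulVec (fun i => Δ k i) (fun j => Δ k j)))))
    (S : Matrix (Fin K × Fin 3) (Fin 3) ℝ)
    (hS : ∀ (k : Fin K) (r c : Fin 3), S (k, r) c = U k r c) :
    S.rank = 2 := by
  classical
  -- base index
  set k0 : Fin K := ⟨0, hK⟩ with hk0
  set d : Fin 3 → ℝ := fun i => Δ k0 i with hd
  have hd0 : d ≠ 0 := by
    intro h
    apply hΔ k0
    ext i
    exact congrFun h i
  -- every Δ k is a nonzero multiple of Δ k0
  have hlin : ∀ k : Fin K, ∃ ε : ℝ, ε ≠ 0 ∧ Δ k = ε • Δ k0 := by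
    intro k
    obtain ⟨n, hn⟩ := k
    induction n with
    | zero => exact ⟨1, one_ne_zero, by simp [hk0]⟩
    | succ m ih =>
      have hm : m < K := Nat.lt_of_succ_lt hn
      obtain ⟨ε₁, hε₁, h1⟩ := hcol ⟨m+1, hn⟩ ⟨m, hm⟩ rfl
      obtain ⟨ε₂, hε₂, h2⟩ := ih hm
      exact ⟨ε₁ * ε₂, mul_ne_zero hε₁ hε₂, by rw [h1, h2, smul_smul]⟩
    -- norms
  -- key: the 2x?? matrix M has rank 2 and S factors through it
  set M : Matrix (Fin 3) (Fin 3) ℝ :=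
    Rᵀ * ((d ⬝ᵥ d) • (1 : Matrix (Fin 3) (Fin 3) ℝ) - vecMulVec d d) with hMdef
  have hRT : IsUnit Rᵀ.det := by rwa [Matrix.det_transpose]
  have hMrank : M.rank = 2 := by
    rw [hMdef, Matrix.rank_mul_eq_right_of_isUnit_det _ _ hRT, rank_aux d hd0]
  -- each block U k is a nonzero multiple of M
  have hnorm_sq : ∀ k : Fin K, ‖Δ k‖ ^ 2
      = (fun i => Δ k i) ⬝ᵥ (fun i => Δ k i) := by
    intro k
    rw [← real_inner_self_eq_norm_sq]
    simp [PiLp.inner_apply, dotProduct, RCLike.inner_apply, mul_comm]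
    rw [EuclideanSpace.norm_eq, Real.sq_sqrt (by positivity)]
    simp only [Real.norm_eq_abs, sq_abs, sq, abs_mul_abs_self]
  have hblock : ∀ k : Fin K, ∃ c : ℝ, c ≠ 0 ∧ U k = c • M := by
    intro k
    obtain ⟨ε, hε, hεΔ⟩ := hlin k
    have hnk : ‖Δ k‖ ≠ 0 := norm_ne_zero_iff.mpr (hΔ k)
    refine ⟨-((‖Δ k‖ ^ 3)⁻¹ * ε ^ 2), ?_, ?_⟩
    · simp [hnk, hε]
    · have hΔk : (fun i => Δ k i) = fun i => ε * d i := by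
        funext i
        rw [hεΔ]
        simp [hd]
      have hsq : ‖Δ k‖ ^ 2 = ε ^ 2 * (d ⬝ᵥ d) := by
        rw [hnorm_sq k, hΔk]
        simp only [dotProduct, Finset.mul_sum]
        exact Finset.sum_congr rfl fun j _ => by ring
      have hvv : vecMulVec (fun i => ε * d i) (fun j => ε * d j)
          = ε ^ 2 • vecMulVec d d := by
        ext i j
        simp only [vecMulVec_apply, Matrix.smul_apply, smul_eq_mul]
        ring
      rw [hU k, hΔk, hsq, hvv, hMdef]
      have hfold : (ε ^ 2 * (d ⬝ᵥ d)) • (1 : Matrix (Fin 3) (Fin 3) ℝ)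
          - ε ^ 2 • vecMulVec d d
          = ε ^ 2 • ((d ⬝ᵥ d) • (1 : Matrix (Fin 3) (Fin 3) ℝ) - vecMulVec d d) := by
        rw [smul_sub, smul_smul]
      rw [hfold, Matrix.mul_smul, smul_smul, neg_smul]
  -- choose coefficients
  choose c hc hUc using hblock
  -- upper bound: S = A * M
  have hSfac : S = (Matrix.of fun p r' => c p.1 * (if p.2 = r' then 1 else 0)) * M := by
    ext ⟨k, r⟩ j
    rw [hS k r j, hUc k]
    simp [Matrix.mul_apply, Matrix.smul_apply, ite_mul, mul_comm]
    change c k * M r j = ∑ x, (if (k, r).2 = x then c k else 0) * M x j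
    simp [ite_mul]
  have hub : S.rank ≤ M.rank := by
    rw [hSfac]
    exact Matrix.rank_mul_le_right _ _
  -- lower bound: M = B * S
  have hMfac : M = (Matrix.of fun r (p : Fin K × Fin 3) =>
      if p.1 = k0 ∧ p.2 = r then (c k0)⁻¹ else 0) * S := by
    ext r j
    rw [Matrix.mul_apply]
    rw [Fintype.sum_prod_type]
    simp only [Matrix.of_apply]
    rw [Finset.sum_eq_single k0]
    · rw [Finset.sum_eq_single r]
      · simp [hS k0 r j, hUc k0, Matrix.smul_apply, hc k0]
      · intro b _ hb; simp [hb]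
      · simp
    · intro b _ hb
      apply Finset.sum_eq_zero
      intro x _
      simp [hb]
    · simp
  have hlb : M.rank ≤ S.rank := by
    rw [hMfac]
    exact Matrix.rank_mul_le_right _ _
  omega
end
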